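/- Let K be an algebraically closed subfield of ℂ and G a discrete group. Then every multiplier σ on G with values in 𝒰(K) is cohomologous, via a map s : G → 𝒰(K), to a multiplier σ' with values in 𝒰(K) satisfying σ'(g,g⁻¹) = 1 for all g ∈ G. -/

import Mathlib

open scoped ComplexConjugate

noncomputable section

/-- `l²(X)`, the Hilbert space of square-summable complex functions on `X`. -/
abbrev l2 (X : Type*) : Type _ := lp (fun _ : X => ℂ) 2

/-- A (normalized) multiplier on a discrete group `G`: a `U(1)`-valued 2-cocycle. -/
def IsMultiplier {G : Type*} [Group G] (σ : G → G → ℂ) : Prop :=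
  (∀ g h, ‖σ g h‖ = 1) ∧
  (∀ a b c, σ b c * σ a (b * c) = σ (a * b) c * σ a b) ∧
  (∀ g, σ 1 g = 1) ∧ (∀ g, σ g 1 = 1)

/-- `A` acts on `l²(G)^d` (realized as `l²(G × Fin d)`) as the matrix over the twisted
group algebra with coefficient matrices `a g` supported in the finite set `T`, i.e.
`(Af)(x) = ∑_h a(xh⁻¹) σ(xh⁻¹,h) f(h) = ∑_{g∈T} a(g) σ(g,g⁻¹x) f(g⁻¹x)`. -/
def ActsAsTwisted {G : Type*} [Group G] (σ : G → G → ℂ) (d : ℕ) (T : Finset G)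
    (a : G → Matrix (Fin d) (Fin d) ℂ)
    (A : l2 (G × Fin d) →L[ℂ] l2 (G × Fin d)) : Prop :=
  (∀ g, g ∉ T → a g = 0) ∧
  ∀ (f : l2 (G × Fin d)) (x : G) (i : Fin d),
    A f (x, i) = ∑ g ∈ T, ∑ j, a g i j * σ g (g⁻¹ * x) * f (g⁻¹ * x, j)

/-- `lam` is an eigenvalue of the bounded operator `A` on `l²(X)`. -/
def HasL2Eigenvalue {X : Type*} (A : l2 X →L[ℂ] l2 X) (lam : ℂ) : Prop :=
  ∃ f : l2 X, f ≠ 0 ∧ A f = lam • f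

/-- The `σ`-multiplier algebraic eigenvalue property: every matrix over the twisted group
algebra `ℚ̄(G,σ)` acting on `l²(G)^d` has only algebraic eigenvalues. -/
def HasMAEP (G : Type*) [Group G] (σ : G → G → ℂ) : Prop :=
  ∀ (d : ℕ) (T : Finset G) (a : G → Matrix (Fin d) (Fin d) ℂ),
    (∀ g i j, IsAlgebraic ℚ (a g i j)) →
    ∀ A : l2 (G × Fin d) →L[ℂ] l2 (G × Fin d), ActsAsTwisted σ d T a A →
    ∀ lam : ℂ, HasL2Eigenvalue A lam → IsAlgebraic ℚ lam

/-- The (untwisted) algebraic eigenvalue property. -/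
def HasAEP (G : Type*) [Group G] : Prop := HasMAEP G fun _ _ => 1

/-- If `K` is an algebraically closed subfield of `ℂ`, then every multiplier `σ` on a
discrete group `G` with values in `𝒰(K) = K ∩ U(1)` is cohomologous, via a map
`s : G → 𝒰(K)`, to a multiplier `σ'` with values in `𝒰(K)` satisfying
`σ'(g,g⁻¹) = 1` for all `g ∈ G`. -/
theorem exists_cohomologous_multiplier_inv_one {G : Type*} [Group G]
    (K : Subfield ℂ) (hK : IsAlgClosed K)
    (σ : G → G → ℂ) (hσ : IsMultiplier σ) (hσK : ∀ g h, σ g h ∈ K) :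
    ∃ (s : G → ℂ) (σ' : G → G → ℂ),
      (∀ g, s g ∈ K ∧ ‖s g‖ = 1) ∧
      IsMultiplier σ' ∧ (∀ g h, σ' g h ∈ K) ∧
      (∀ g h, σ g h = s g * s h * conj (s (g * h)) * σ' g h) ∧
      (∀ g : G, σ' g g⁻¹ = 1) := by
  classical
  obtain ⟨habs, hcoc, hone, hone2⟩ := hσ
  -- symmetry σ(g,g⁻¹) = σ(g⁻¹,g)
  have hsym : ∀ g : G, σ g g⁻¹ = σ g⁻¹ g := by
    intro g
    have := hcoc g g⁻¹ g
    simp [hone, hone2] at this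
    exact this.symm
  -- square root function on K
  have hroot : ∀ z : K, ∃ w : K, w ^ 2 = z := fun z =>
    IsAlgClosed.exists_pow_nat_eq z two_pos
  set R : K → K := fun z => Classical.choose (hroot z) with hR
  have hRsq : ∀ z : K, (R z) ^ 2 = z := fun z => Classical.choose_spec (hroot z)
  set s : G → ℂ := fun g => if g = 1 then 1 else (R ⟨σ g g⁻¹, hσK g g⁻¹⟩ : ℂ) with hs
  have hsK : ∀ g, s g ∈ K := by
    intro g; simp only [hs]
    split
    · exact one_mem K
    · exact (R _).2
  have hsprod : ∀ g : G, s g * s g⁻¹ = σ g g⁻¹ := by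
    intro g
    by_cases h1 : g = 1
    · simp [hs, h1, hone 1]
    · have h2 : g⁻¹ ≠ 1 := by simpa using h1
      have key : (⟨σ g⁻¹ (g⁻¹)⁻¹, hσK g⁻¹ (g⁻¹)⁻¹⟩ : K) = ⟨σ g g⁻¹, hσK g g⁻¹⟩ := by
        ext; simp [hsym g]
      simp only [hs, if_neg h1, if_neg h2, key]
      have hcoe : ((R ⟨σ g g⁻¹, hσK g g⁻¹⟩ ^ 2 : K) : ℂ) = σ g g⁻¹ :=
        congrArg Subtype.val (hRsq _)
      push_cast at hcoe
      rw [← sq]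
      exact hcoe
  have hsabs : ∀ g, ‖s g‖ = 1 := by
    intro g
    by_cases h1 : g = 1
    · simp [hs, h1]
    · have h2 : g⁻¹ ≠ 1 := by simpa using h1
      have h := hsprod g
      have := habs g g⁻¹
      have heq : ‖s g‖ * ‖s g⁻¹‖ = 1 := by
        rw [← norm_mul, h, this]
      have same : s g = s g⁻¹ := by
        have key : (⟨σ g⁻¹ (g⁻¹)⁻¹, hσK g⁻¹ (g⁻¹)⁻¹⟩ : K) = ⟨σ g g⁻¹, hσK g g⁻¹⟩ := by
          ext; simp [hsym g]
        simp only [hs, if_neg h1, if_neg h2, key]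
      rw [← same] at heq
      nlinarith [norm_nonneg (s g)]
  have hs1 : s 1 = 1 := by simp [hs]
  have hsne : ∀ g, s g ≠ 0 := fun g => by
    intro h; have := hsabs g; rw [h] at this; simp at this
  have hconj : ∀ g, conj (s g) = (s g)⁻¹ := by
    intro g
    have : s g * conj (s g) = 1 := by
      rw [Complex.mul_conj, Complex.normSq_eq_norm_sq, hsabs]; norm_num
    exact eq_inv_of_mul_eq_one_left (by rw [mul_comm]; exact this)
  have hunit : ∀ g, s g * conj (s g) = 1 := fun g => by
    rw [hconj]; exact mul_inv_cancel₀ (hsne g)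
  have hσne : ∀ g h, σ g h ≠ 0 := fun g h => by
    intro e; have := habs g h; rw [e] at this; simp at this
  refine ⟨s, fun g h => conj (s g) * conj (s h) * s (g * h) * σ g h,
    fun g => ⟨hsK g, hsabs g⟩, ⟨?_, ?_, ?_, ?_⟩, ?_, ?_, ?_⟩
  · intro g h
    simp [map_mul, hsabs, habs, Complex.norm_conj]
  · intro a b c
    show conj (s b) * conj (s c) * s (b * c) * σ b c *
        (conj (s a) * conj (s (b * c)) * s (a * (b * c)) * σ a (b * c)) =
      conj (s (a * b)) * conj (s c) * s (a * b * c) * σ (a * b) c *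
        (conj (s a) * conj (s b) * s (a * b) * σ a b)
    have hc := hcoc a b c
    have h1 := hunit (b * c)
    have h2 := hunit (a * b)
    rw [mul_assoc a b c]
    linear_combination
      (conj (s a) * conj (s b) * conj (s c) * s (a * (b * c)) * (σ b c * σ a (b * c))) * h1 +
      (conj (s a) * conj (s b) * conj (s c) * s (a * (b * c))) * hc -
      (conj (s a) * conj (s b) * conj (s c) * s (a * (b * c)) * (σ (a * b) c * σ a b)) * h2
  · intro g
    show conj (s 1) * conj (s g) * s (1 * g) * σ 1 g = 1
    rw [hs1, one_mul, hone]
    simpa [mul_comm] using hunit g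
  · intro g
    show conj (s g) * conj (s 1) * s (g * 1) * σ g 1 = 1
    rw [hs1, mul_one, hone2]
    simpa [mul_comm] using hunit g
  · intro g h
    have hconjK : conj (s g) ∈ K := by rw [hconj]; exact inv_mem (hsK g)
    have hconjK' : conj (s h) ∈ K := by rw [hconj]; exact inv_mem (hsK h)
    exact mul_mem (mul_mem (mul_mem hconjK hconjK') (hsK (g * h))) (hσK g h)
  · intro g h
    show σ g h = s g * s h * conj (s (g * h)) *
      (conj (s g) * conj (s h) * s (g * h) * σ g h)
    have h1 := hunit g
    have h2 := hunit h
    have h3 := hunit (g * h)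
    linear_combination (-(σ g h)) * h1 +
      (-(σ g h * (s g * conj (s g)))) * h2 +
      (-(σ g h * (s g * conj (s g)) * (s h * conj (s h)))) * h3
  · intro g
    show conj (s g) * conj (s g⁻¹) * s (g * g⁻¹) * σ g g⁻¹ = 1
    rw [mul_inv_cancel, hs1, mul_one]
    have h1 := hsprod g
    have h2 := hunit g
    have h3 := hunit g⁻¹
    linear_combination (-(conj (s g) * conj (s g⁻¹))) * h1 +
      (conj (s g⁻¹) * s g⁻¹) * h2 + h3
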